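/- For every integer n ≥ 3, the sequence z_n = (s_n − γ) − (1/(12n³) + 11/(120n⁴)) is strictly decreasing, i.e. z_{n+1} < z_n for all n ≥ 3, where s_n = (∑_{k=1}^{n−2} 1/k) + 13/(12(n−1)) + 5/(12n) − ln n. -/

import Mathlib

set_option maxHeartbeats 2000000

noncomputable def s (n : ℕ) : ℝ :=
  (∑ k ∈ Finset.Icc 1 (n - 2), (1 : ℝ) / k) + 13 / (12 * ((n : ℝ) - 1)) + 5 / (12 * n)
    - Real.log n

noncomputable def z (n : ℕ) : ℝ :=
  (s n - Real.eulerMascheroniConstant)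
    - (1 / (12 * (n : ℝ) ^ 3) + 11 / (120 * (n : ℝ) ^ 4))

lemma key_log_ineq (x : ℝ) (hx : 3 ≤ x) :
    1/(x-1) + 13/(12*x) + 5/(12*(x+1))
      - (1/(12*(x+1)^3) + 11/(120*(x+1)^4))
      - (13/(12*(x-1)) + 5/(12*x) - (1/(12*x^3) + 11/(120*x^4)))
    < Real.log (x+1) - Real.log x := by
  have hx0 : (0:ℝ) < x := by linarith
  have hx1 : (0:ℝ) < x - 1 := by linarith
  have hx2 : (0:ℝ) < x + 1 := by linarith
  have hxne : x ≠ 0 := ne_of_gt hx0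
  have hy : |(-x⁻¹ : ℝ)| < 1 := by
    rw [abs_neg, abs_of_pos (inv_pos.mpr hx0)]
    rw [inv_lt_one_iff₀]
    right; linarith
  have H := Real.abs_log_sub_add_sum_range_le hy 7
  have hsum : (∑ i ∈ Finset.range 7, (-x⁻¹:ℝ) ^ (i+1) / (i+1))
      = -(1/x) + 1/(2*x^2) - 1/(3*x^3) + 1/(4*x^4) - 1/(5*x^5) + 1/(6*x^6) - 1/(7*x^7) := by
    simp [Finset.sum_range_succ]
    field_simp
    ring
  have h1my : (1:ℝ) - (-x⁻¹) = (x+1)/x := by field_simp; ring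
  have hlogd : Real.log ((x+1)/x) = Real.log (x+1) - Real.log x :=
    Real.log_div (ne_of_gt hx2) hxne
  rw [hsum, h1my, hlogd] at H
  have habs : |(-x⁻¹:ℝ)| = 1/x := by
    rw [abs_neg, abs_of_pos (inv_pos.mpr hx0)]; exact inv_eq_one_div x
  rw [habs] at H
  have herr : ((1:ℝ)/x)^(7+1) / (1 - 1/x) = 1/(x^7*(x-1)) := by
    have h1 : (1:ℝ) - 1/x = (x-1)/x := by field_simp
    rw [h1]
    field_simp
    ring_nf
    rw [← mul_pow, mul_inv_cancel₀ hxne, one_pow]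
  rw [herr] at H
  have hlog := (abs_le.mp H).1
  have hrat : 1/(x-1) + 13/(12*x) + 5/(12*(x+1))
      - (1/(12*(x+1)^3) + 11/(120*(x+1)^4))
      - (13/(12*(x-1)) + 5/(12*x) - (1/(12*x^3) + 11/(120*x^4)))
    < 1/x - 1/(2*x^2) + 1/(3*x^3) - 1/(4*x^4) + 1/(5*x^5) - 1/(6*x^6) + 1/(7*x^7)
      - 1/(x^7*(x-1)) := by
    rw [← sub_pos]
    have heq : (1/x - 1/(2*x^2) + 1/(3*x^3) - 1/(4*x^4) + 1/(5*x^5) - 1/(6*x^6) + 1/(7*x^7)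
        - 1/(x^7*(x-1)))
      - (1/(x-1) + 13/(12*x) + 5/(12*(x+1))
      - (1/(12*(x+1)^3) + 11/(120*(x+1)^4))
      - (13/(12*(x-1)) + 5/(12*x) - (1/(12*x^3) + 11/(120*x^4))))
      = (150150*x^6 + 171600*x^5 - 190905*x^4 - 1311453*x^3 - 2157012*x^2
          - 1535820*x - 411840) / (360360 * x^7 * (x-1) * (x+1)^4) := by
      field_simp
      ring
    rw [heq]
    apply div_pos
    · nlinarith [pow_nonneg (by linarith : (0:ℝ) ≤ x - 3) 2,
        pow_nonneg (by linarith : (0:ℝ) ≤ x - 3) 3,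
        pow_nonneg (by linarith : (0:ℝ) ≤ x - 3) 4,
        pow_nonneg (by linarith : (0:ℝ) ≤ x - 3) 5,
        pow_nonneg (by linarith : (0:ℝ) ≤ x - 3) 6]
    · positivity
  linarith [hlog, hrat]

theorem z_strict_decreasing (n : ℕ) (hn : 3 ≤ n) : z (n + 1) < z n := by
  have hx : (3:ℝ) ≤ (n:ℝ) := by exact_mod_cast hn
  have hk := key_log_ineq (n:ℝ) hx
  unfold z s
  have h2 : n + 1 - 2 = (n - 2) + 1 := by omega
  rw [h2, Finset.sum_Icc_succ_top (by omega : 1 ≤ n - 2 + 1)]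
  have h3 : ((n - 2 + 1 : ℕ) : ℝ) = (n:ℝ) - 1 := by
    have : n - 2 + 1 = n - 1 := by omega
    rw [this]
    push_cast [Nat.cast_sub (by omega : 1 ≤ n)]
    ring
  rw [h3]
  push_cast
  have e2 : (n:ℝ) + 1 - 1 = (n:ℝ) := by ring
  rw [e2]
  linarith [hk]
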